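/- If E is an antichain of subsets of V (all of size ≥ 2) and W = ∑_{e ∈ E} U_e, then the maximal elements under inclusion of the collection D = {S ⊆ V : |S| ≥ 2, U_S ⊆ W} are exactly the hyperedges in E. -/

import Mathlib

open Submodule Finset

variable {V : Type*} [Fintype V] [DecidableEq V]

/-- The set of nontrivial partitions `Π*(α)` of `α`, encoded as setoids different from `⊤`
(the one-block partition). -/
def NontrivPart (α : Type*) := {P : Setoid α // P ≠ ⊤}

/-- Restriction `P|_S` of a partition of `V` to a subset `S`: the partition of `S` whose blocks
are the nonempty intersections of blocks of `P` with `S`. -/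
def restrictS (S : Set V) (P : Setoid V) : Setoid ↥S := Setoid.comap Subtype.val P

open Classical in
/-- The indicator function `1_{S,π} : Π*(V) → ℝ`, equal to `1` at `P` iff `P|_S = π`. -/
noncomputable def ind (S : Set V) (π : Setoid ↥S) : NontrivPart V → ℝ :=
  fun P => if restrictS S P.1 = π then 1 else 0

/-- The subspace `U_S ⊆ ℝ^{Π*(V)}` spanned by the indicators `1_{S,π}` over nontrivial
partitions `π` of `S` (equal to `{0}` when `|S| ≤ 1`, since then no nontrivial `π` exists). -/
noncomputable def U (S : Set V) : Submodule ℝ (NontrivPart V → ℝ) :=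
  Submodule.span ℝ {f | ∃ π : Setoid ↥S, π ≠ ⊤ ∧ f = ind S π}

/-- Bell number `B n`: the number of partitions (setoids) of an `n`-element set. -/
noncomputable def bell (n : ℕ) : ℕ := Nat.card (Setoid (Fin n))

/-- Stirling number of the second kind `S(u,j)`: the number of partitions of a `u`-element set
into exactly `j` blocks. -/
noncomputable def stirling (u j : ℕ) : ℕ :=
  Nat.card {σ : Setoid (Fin u) // Nat.card (Quotient σ) = j}

noncomputable instance setoidFintype (α : Type*) [Finite α] : Fintype (Setoid α) := by
  have : Finite (Setoid α) := Finite.of_injective (fun s : Setoid α => s.r)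
    (fun s t h => by cases s; cases t; cases h; rfl)
  exact Fintype.ofFinite _

/-- Möbius-type weight on partitions. -/
noncomputable def wt {α : Type*} (σ : Setoid α) : ℝ :=
  (-1)^(Nat.card (Quotient σ) + 1) * (Nat.card (Quotient σ) - 1).factorial

lemma wt_ne_zero {α : Type*} (σ : Setoid α) : wt σ ≠ 0 := by
  unfold wt
  positivity

/-- "Make x₀ a singleton" operation. -/
def phi {α : Type*} (x₀ : α) (σ : Setoid α) : Setoid α where
  r a b := a = b ∨ (a ≠ x₀ ∧ b ≠ x₀ ∧ σ a b)
  iseqv := by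
    constructor
    · intro a; exact Or.inl rfl
    · rintro a b (rfl | ⟨ha, hb, h⟩); exact Or.inl rfl
      exact Or.inr ⟨hb, ha, σ.symm h⟩
    · rintro a b c (rfl | ⟨ha, hb, h⟩) h2; exact h2
      rcases h2 with (rfl | ⟨hb', hc, h'⟩); exact Or.inr ⟨ha, hb, h⟩
      exact Or.inr ⟨ha, hc, σ.trans h h'⟩

lemma phi_rel {α : Type*} (x₀ : α) (σ : Setoid α) (a b : α) :
    (phi x₀ σ) a b ↔ a = b ∨ (a ≠ x₀ ∧ b ≠ x₀ ∧ σ a b) := Iff.rfl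

lemma phi_idem {α : Type*} (x₀ : α) (σ : Setoid α) : phi x₀ (phi x₀ σ) = phi x₀ σ := by
  apply Setoid.ext; intro a b
  constructor
  · rintro (rfl | ⟨h1, h2, (rfl | ⟨_, _, h⟩)⟩)
    · exact Or.inl rfl
    · exact Or.inl rfl
    · exact Or.inr ⟨h1, h2, h⟩
  · rintro (rfl | ⟨h1, h2, h⟩)
    · exact Or.inl rfl
    · exact Or.inr ⟨h1, h2, Or.inr ⟨h1, h2, h⟩⟩

section Merge
variable {α : Type*} (τ : Setoid α) (x₀ : α)

/-- membership in the union of class `q` and class of `x₀`. -/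
def mpred (q : Quotient τ) (a : α) : Prop := Quotient.mk τ a = q ∨ τ a x₀

lemma mpred_invar {q : Quotient τ} {a b : α} (h : τ a b) (hb : mpred τ x₀ q b) :
    mpred τ x₀ q a := by
  rcases hb with h1 | h2
  · exact Or.inl ((Quotient.sound h).trans h1)
  · exact Or.inr (τ.trans h h2)

/-- the partition obtained from `τ` by merging class `q` with the class of `x₀`. -/
def merge (q : Quotient τ) : Setoid α where
  r a b := τ a b ∨ (mpred τ x₀ q a ∧ mpred τ x₀ q b)
  iseqv := by
    constructor
    · exact fun a => Or.inl (τ.refl a)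
    · rintro a b (h | ⟨ha, hb⟩)
      exacts [Or.inl (τ.symm h), Or.inr ⟨hb, ha⟩]
    · rintro a b c (hab | ⟨ha, hb⟩) (hbc | ⟨hb', hc⟩)
      · exact Or.inl (τ.trans hab hbc)
      · exact Or.inr ⟨mpred_invar τ x₀ hab hb', hc⟩
      · exact Or.inr ⟨ha, mpred_invar τ x₀ (τ.symm hbc) hb⟩
      · exact Or.inr ⟨ha, hc⟩

lemma merge_rel {q : Quotient τ} {a b : α} :
    (merge τ x₀ q) a b ↔ τ a b ∨ (mpred τ x₀ q a ∧ mpred τ x₀ q b) := Iff.rfl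

variable (hx : ∀ a, τ a x₀ → a = x₀)

include hx in
lemma phi_merge {q : Quotient τ} (hq : q ≠ Quotient.mk τ x₀) :
    phi x₀ (merge τ x₀ q) = τ := by
  apply Setoid.ext; intro a b
  constructor
  · rintro (rfl | ⟨ha, hb, (hab | ⟨ha', hb'⟩)⟩)
    · exact τ.refl a
    · exact hab
    · -- mpred a, mpred b with a b ≠ x₀ : both in class q
      rcases ha' with h1 | h2
      swap; · exact absurd (hx _ h2) ha
      rcases hb' with h1' | h2'
      swap; · exact absurd (hx _ h2') hb
      exact Quotient.exact (h1.trans h1'.symm)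
  · intro hab
    by_cases hab' : a = b
    · exact Or.inl hab'
    have ha : a ≠ x₀ := fun h => hab' (((hx b (τ.symm (h ▸ hab)))).trans h.symm).symm
    have hb : b ≠ x₀ := fun h => hab' ((hx a (h ▸ hab)).trans h.symm)
    exact Or.inr ⟨ha, hb, Or.inl hab⟩

include hx in
lemma merge_ne {q : Quotient τ} (hq : q ≠ Quotient.mk τ x₀) : merge τ x₀ q ≠ τ := by
  intro h
  have h1 : (merge τ x₀ q) q.out x₀ := Or.inr ⟨Or.inl q.out_eq, Or.inr (τ.refl x₀)⟩
  rw [h] at h1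
  exact hq ((Quotient.out_eq q).symm.trans (congrArg _ (hx _ h1)) |>.trans (Quotient.sound (τ.refl x₀)))

include hx in
lemma merge_inj {q₁ q₂ : Quotient τ} (h1 : q₁ ≠ Quotient.mk τ x₀) (h2 : q₂ ≠ Quotient.mk τ x₀)
    (h : merge τ x₀ q₁ = merge τ x₀ q₂) : q₁ = q₂ := by
  have hm : (merge τ x₀ q₁) q₁.out x₀ := Or.inr ⟨Or.inl q₁.out_eq, Or.inr (τ.refl x₀)⟩
  rw [h] at hm
  rcases hm with hm | ⟨ha, _⟩
  · exact absurd (q₁.out_eq.symm.trans (congrArg _ (hx _ hm)) ) h1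
  rcases ha with ha | ha
  · exact (q₁.out_eq.symm.trans ha)
  · exact absurd (q₁.out_eq.symm.trans (congrArg _ (hx _ ha))) h1
end Merge

section Classify
variable {α : Type*} {x₀ : α} {τ : Setoid α}

/-- every setoid in the `phi`-fiber over `τ` is `τ` itself or a merge. -/
lemma fiber_classify {σ : Setoid α} (h : phi x₀ σ = τ) :
    σ = τ ∨ ∃ q : Quotient τ, q ≠ Quotient.mk τ x₀ ∧ σ = merge τ x₀ q := by
  by_cases hs : ∀ y, σ x₀ y → y = x₀
  · left
    rw [← h]
    apply Setoid.ext; intro a b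
    constructor
    · intro hab
      rcases eq_or_ne a b with rfl | hne
      · exact Or.inl rfl
      rcases eq_or_ne a x₀ with rfl | ha
      · exact absurd (hs b hab) (Ne.symm hne)
      rcases eq_or_ne b x₀ with rfl | hb
      · exact absurd (hs a (σ.symm hab)) hne
      · exact Or.inr ⟨ha, hb, hab⟩
    · rintro (rfl | ⟨_, _, hab⟩)
      exacts [σ.refl a, hab]
  · push_neg at hs
    obtain ⟨y, hxy, hy⟩ := hs
    right
    have hτ : ∀ a b, τ a b ↔ (a = b ∨ (a ≠ x₀ ∧ b ≠ x₀ ∧ σ a b)) := fun a b => by rw [← h]; rfl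
    have hτx : ∀ a, τ a x₀ → a = x₀ := by
      intro a ha
      rcases (hτ a x₀).1 ha with h1 | ⟨_, h2, _⟩
      exacts [h1, absurd rfl h2]
    refine ⟨Quotient.mk τ y, ?_, ?_⟩
    · intro hc
      exact hy (hτx y (Quotient.exact hc))
    · -- σ = merge τ x₀ ⟦y⟧
      have hmp : ∀ c, mpred τ x₀ (Quotient.mk τ y) c ↔ σ c y := by
        intro c
        constructor
        · rintro (h1 | h2)
          · rcases (hτ c y).1 (Quotient.exact h1) with rfl | ⟨_, _, h3⟩
            exacts [σ.refl c, h3]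
          · rw [hτx c h2]; exact hxy
        · intro hcy
          by_cases hc : c = x₀
          · exact Or.inr (hc ▸ τ.refl c)
          · exact Or.inl (Quotient.sound ((hτ c y).2 (Or.inr ⟨hc, hy, hcy⟩)))
      apply Setoid.ext; intro a b
      rw [merge_rel, hmp, hmp, hτ]
      constructor
      · intro hab
        rcases eq_or_ne a b with rfl | hne
        · exact Or.inl (Or.inl rfl)
        by_cases ha : a = x₀
        · have hay : σ a y := by rw [ha]; exact hxy
          exact Or.inr ⟨hay, σ.trans (σ.symm hab) hay⟩
        by_cases hb : b = x₀
        · have hby : σ b y := by rw [hb]; exact hxy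
          exact Or.inr ⟨σ.trans hab hby, hby⟩
        · exact Or.inl (Or.inr ⟨ha, hb, hab⟩)
      · rintro ((rfl | ⟨_, _, hab⟩) | ⟨h1, h2⟩)
        exacts [σ.refl a, hab, σ.trans h1 (σ.symm h2)]

end Classify

section Card
open Classical in
lemma card_quotient_merge {α : Type*} [Finite α] (τ : Setoid α) (x₀ : α)
    (hx : ∀ a, τ a x₀ → a = x₀) {q : Quotient τ} (hq : q ≠ Quotient.mk τ x₀) :
    Nat.card (Quotient (merge τ x₀ q)) = Nat.card (Quotient τ) - 1 := by
  set m := merge τ x₀ q with hm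
  have hf : ∀ a b : α, τ a b → Quotient.mk m a = Quotient.mk m b :=
    fun a b h => Quotient.sound (Or.inl h)
  let f : Quotient τ → Quotient m := Quotient.lift (fun a => Quotient.mk m a) hf
  have hfmk : ∀ a : α, f (Quotient.mk τ a) = Quotient.mk m a := fun a => rfl
  have hbij : Function.Bijective (fun c : {c : Quotient τ // c ≠ Quotient.mk τ x₀} => f c.1) := by
    constructor
    · rintro ⟨c₁, hc₁⟩ ⟨c₂, hc₂⟩ h
      obtain ⟨a₁, rfl⟩ := Quotient.exists_rep c₁
      obtain ⟨a₂, rfl⟩ := Quotient.exists_rep c₂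
      simp only [hfmk] at h
      have h' := Quotient.exact h
      rcases h' with h' | ⟨ha₁, ha₂⟩
      · exact Subtype.ext (Quotient.sound h')
      have e₁ : Quotient.mk τ a₁ = q := by
        rcases ha₁ with h1 | h2
        · exact h1
        · exact absurd (congrArg (Quotient.mk τ) (hx _ h2)) hc₁
      have e₂ : Quotient.mk τ a₂ = q := by
        rcases ha₂ with h1 | h2
        · exact h1
        · exact absurd (congrArg (Quotient.mk τ) (hx _ h2)) hc₂
      exact Subtype.ext (e₁.trans e₂.symm)
    · intro d
      obtain ⟨a, rfl⟩ := Quotient.exists_rep d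
      by_cases ha : Quotient.mk τ a = Quotient.mk τ x₀
      · refine ⟨⟨q, hq⟩, ?_⟩
        obtain ⟨b, hb⟩ := Quotient.exists_rep q
        show f q = _
        rw [← hb, hfmk]
        exact Quotient.sound (Or.inr ⟨Or.inl hb, Or.inr (Quotient.exact ha)⟩)
      · exact ⟨⟨Quotient.mk τ a, ha⟩, rfl⟩
  have := Nat.card_congr (Equiv.ofBijective _ hbij)
  rw [this.symm]
  -- Nat.card {c // c ≠ z} = Nat.card (Quotient τ) - 1
  have : Nat.card {c : Quotient τ // c ≠ Quotient.mk τ x₀} =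
      Nat.card (Quotient τ) - 1 := by
    have : Fintype (Quotient τ) := Fintype.ofFinite _
    rw [Nat.card_eq_fintype_card, Nat.card_eq_fintype_card]
    exact Set.card_ne_eq _
  rw [this]
end Card

open Classical in
lemma fiber_sum {α : Type*} [Fintype α] (x₀ : α) (hnt : ∃ y : α, y ≠ x₀) (τ : Setoid α) :
    ∑ σ ∈ Finset.univ.filter (fun σ => phi x₀ σ = τ), wt σ = 0 := by
  by_cases hτ : phi x₀ τ = τ
  · -- fiber = {τ} ∪ merges
    have hx : ∀ a, τ a x₀ → a = x₀ := by
      intro a ha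
      rw [← hτ] at ha
      rcases ha with h | ⟨_, h, _⟩
      exacts [h, absurd rfl h]
    have hset : Finset.univ.filter (fun σ => phi x₀ σ = τ) =
        insert τ ((Finset.univ.filter
          (fun q : Quotient τ => q ≠ Quotient.mk τ x₀)).image (merge τ x₀)) := by
      ext σ
      simp only [Finset.mem_filter, Finset.mem_univ, true_and, Finset.mem_insert,
        Finset.mem_image]
      constructor
      · intro h
        rcases fiber_classify h with h1 | ⟨q, hq, h2⟩
        · exact Or.inl h1
        · exact Or.inr ⟨q, by simp [hq], h2.symm⟩
      · rintro (rfl | ⟨q, hq', rfl⟩)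
        · exact hτ
        · exact phi_merge τ x₀ hx (by simpa using hq')
    rw [hset, Finset.sum_insert, Finset.sum_image]
    · -- the computation
      set k := Nat.card (Quotient τ) with hk
      obtain ⟨y, hy⟩ := hnt
      have hk2 : 2 ≤ k := by
        have hne : Quotient.mk τ y ≠ Quotient.mk τ x₀ := fun h => hy (hx y (Quotient.exact h))
        have : Nontrivial (Quotient τ) := ⟨_, _, hne⟩
        have := Fintype.one_lt_card (α := Quotient τ)
        rw [hk, Nat.card_eq_fintype_card]
        omega
      have hterm : ∀ q ∈ Finset.univ.filter (fun q : Quotient τ => q ≠ Quotient.mk τ x₀),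
          wt (merge τ x₀ q) = (-1)^k * (k-2).factorial := by
        intro q hq
        rw [Finset.mem_filter] at hq
        unfold wt
        rw [card_quotient_merge τ x₀ hx hq.2]
        have h1 : k - 1 + 1 = k := by omega
        have h2 : k - 1 - 1 = k - 2 := by omega
        rw [← hk, h1, h2]
      rw [Finset.sum_congr rfl hterm, Finset.sum_const]
      have hcard : (Finset.univ.filter (fun q : Quotient τ => q ≠ Quotient.mk τ x₀)).card
          = k - 1 := by
        rw [Finset.filter_ne', Finset.card_erase_of_mem (Finset.mem_univ _),
          Finset.card_univ, hk, Nat.card_eq_fintype_card]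
      rw [hcard]
      unfold wt
      rw [← hk]
      obtain ⟨j, hj⟩ : ∃ j, k = j + 2 := ⟨k - 2, by omega⟩
      have e1 : j + 2 - 1 = j + 1 := by omega
      have e2 : j + 2 - 2 = j := by omega
      rw [hj, e1, e2, Nat.factorial_succ, nsmul_eq_mul]
      push_cast
      ring
    · -- injectivity of merge on the filter
      intro q hq q' hq' h
      rw [Finset.mem_coe, Finset.mem_filter] at hq hq'
      exact merge_inj τ x₀ hx hq.2 hq'.2 h
    · -- τ not a merge
      simp only [Finset.mem_image, Finset.mem_filter, Finset.mem_univ, true_and, not_exists]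
      rintro q ⟨hq, hmq⟩
      exact merge_ne τ x₀ hx hq hmq
  · -- empty fiber
    rw [Finset.filter_eq_empty_iff.2, Finset.sum_empty]
    intro σ _ h
    exact hτ (by rw [← h, phi_idem, h])


/-- Extension of a partition of `S` to `V` by singletons. -/
def extendS (S : Set V) (σ : Setoid ↥S) : Setoid V where
  r a b := a = b ∨ ∃ (ha : a ∈ S) (hb : b ∈ S), σ ⟨a, ha⟩ ⟨b, hb⟩
  iseqv := by
    constructor
    · exact fun a => Or.inl rfl
    · rintro a b (rfl | ⟨ha, hb, h⟩)
      exacts [Or.inl rfl, Or.inr ⟨hb, ha, σ.symm h⟩]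
    · rintro a b c (rfl | ⟨ha, hb, h⟩) h2
      · exact h2
      rcases h2 with rfl | ⟨hb', hc, h'⟩
      · exact Or.inr ⟨ha, hb, h⟩
      · exact Or.inr ⟨ha, hc, σ.trans h h'⟩

lemma extendS_rel {S : Set V} {σ : Setoid ↥S} {a b : V} :
    (extendS S σ) a b ↔ a = b ∨ ∃ (ha : a ∈ S) (hb : b ∈ S), σ ⟨a, ha⟩ ⟨b, hb⟩ := Iff.rfl

lemma restrict_extendS (S : Set V) (σ : Setoid ↥S) : restrictS S (extendS S σ) = σ := by
  apply Setoid.ext; intro a b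
  rw [restrictS, Setoid.comap_rel, extendS_rel]
  constructor
  · rintro (h | ⟨ha, hb, h⟩)
    · rw [Subtype.ext h]
    · convert h <;> exact Subtype.ext rfl
  · intro h
    exact Or.inr ⟨a.2, b.2, by convert h <;> exact Subtype.ext rfl⟩

lemma restrictS_top (S : Set V) : restrictS S (⊤ : Setoid V) = ⊤ := by
  apply Setoid.ext; intro a b
  rw [restrictS, Setoid.comap_rel]

lemma extendS_ne_top {S : Set V} {σ : Setoid ↥S} (h : σ ≠ ⊤) : extendS S σ ≠ ⊤ := by
  intro he
  apply h
  rw [← restrict_extendS S σ, he, restrictS_top]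

open Classical in
/-- The Möbius linear functional associated to `S`. -/
noncomputable def functL (S : Set V) : (NontrivPart V → ℝ) →ₗ[ℝ] ℝ where
  toFun f := ∑ σ : Setoid ↥S, if h : extendS S σ ≠ ⊤ then wt σ * f ⟨extendS S σ, h⟩ else 0
  map_add' f g := by
    rw [← Finset.sum_add_distrib]
    refine Finset.sum_congr rfl fun σ _ => ?_
    split
    · exact mul_add _ _ _
    · ring
  map_smul' c f := by
    show (∑ σ : Setoid ↥S, if h : extendS S σ ≠ ⊤ then wt σ * (c • f) ⟨extendS S σ, h⟩ else 0)
      = c • ∑ σ : Setoid ↥S, if h : extendS S σ ≠ ⊤ then wt σ * f ⟨extendS S σ, h⟩ else 0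
    rw [smul_eq_mul, Finset.mul_sum]
    refine Finset.sum_congr rfl fun σ _ => ?_
    split
    · exact mul_left_comm _ _ _
    · ring

open Classical in
lemma functL_self (S : Set V) (π₀ : Setoid ↥S) (hπ : π₀ ≠ ⊤) :
    functL S (ind S π₀) = wt π₀ := by
  show (∑ σ : Setoid ↥S, if h : extendS S σ ≠ ⊤ then wt σ * (ind S π₀) ⟨extendS S σ, h⟩ else 0)
    = wt π₀
  rw [Finset.sum_eq_single π₀]
  · rw [dif_pos (extendS_ne_top hπ)]
    unfold ind
    rw [restrict_extendS, if_pos rfl, mul_one]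
  · intro σ _ hσ
    split
    · unfold ind
      rw [restrict_extendS, if_neg hσ, mul_zero]
    · rfl
  · simp

open Classical in
lemma functL_other (S : Set V) (e : Set V) (x₀ : ↥S) (hx₀ : (x₀ : V) ∉ e)
    (hnt : ∃ y : ↥S, y ≠ x₀) (π : Setoid ↥e) (hπ : π ≠ ⊤) :
    functL S (ind e π) = 0 := by
  show (∑ σ : Setoid ↥S, if h : extendS S σ ≠ ⊤ then wt σ * (ind e π) ⟨extendS S σ, h⟩ else 0) = 0
  -- rewrite each term
  have hterm : ∀ σ : Setoid ↥S,
      (if h : extendS S σ ≠ ⊤ then wt σ * (ind e π) ⟨extendS S σ, h⟩ else 0)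
        = if restrictS e (extendS S (phi x₀ σ)) = π then wt σ else 0 := by
    intro σ
    have hinv : restrictS e (extendS S σ) = restrictS e (extendS S (phi x₀ σ)) := by
      apply Setoid.ext; intro a b
      show ((a : V) = b ∨ ∃ (ha : (a : V) ∈ S) (hb : (b : V) ∈ S), σ ⟨a, ha⟩ ⟨b, hb⟩) ↔
        ((a : V) = b ∨ ∃ (ha : (a : V) ∈ S) (hb : (b : V) ∈ S), (phi x₀ σ) ⟨a, ha⟩ ⟨b, hb⟩)
      constructor
      · rintro (h | ⟨ha, hb, h⟩)
        · exact Or.inl h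
        refine Or.inr ⟨ha, hb, Or.inr ⟨?_, ?_, h⟩⟩
        · intro hc; apply hx₀; rw [← hc]; exact a.2
        · intro hc; apply hx₀; rw [← hc]; exact b.2
      · rintro (h | ⟨ha, hb, (heq | ⟨_, _, h⟩)⟩)
        · exact Or.inl h
        · exact Or.inl (congrArg (fun z : ↥S => (z : V)) heq)
        · exact Or.inr ⟨ha, hb, h⟩
    by_cases h : extendS S σ ≠ ⊤
    · rw [dif_pos h]
      unfold ind
      rw [hinv]
      split <;> ring
    · rw [dif_neg h]
      push_neg at h
      rw [if_neg]
      rw [← hinv, h, restrictS_top]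
      exact fun hc => hπ hc.symm
  rw [Finset.sum_congr rfl (fun σ _ => hterm σ),
    ← Finset.sum_fiberwise Finset.univ (phi x₀)
      (fun σ => if restrictS e (extendS S (phi x₀ σ)) = π then wt σ else 0)]
  apply Finset.sum_eq_zero
  intro τ _
  have hcg : ∀ σ ∈ Finset.univ.filter (fun σ => phi x₀ σ = τ),
      (if restrictS e (extendS S (phi x₀ σ)) = π then wt σ else 0)
        = if restrictS e (extendS S τ) = π then wt σ else 0 := by
    intro σ hσ
    rw [Finset.mem_filter] at hσ
    rw [hσ.2]
  rw [Finset.sum_congr rfl hcg]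
  by_cases hc : restrictS e (extendS S τ) = π
  · simp only [if_pos hc]
    exact fiber_sum x₀ hnt τ
  · simp only [if_neg hc]
    exact Finset.sum_const_zero

/-- Key lemma: if `S` has at least 2 elements and is not contained in any member of `E`,
then `U S` is not contained in the span of the `U e`. -/
lemma key_lemma (S : Set V) (hS : 2 ≤ Nat.card ↥S) (E : Set (Set V))
    (hne : ∀ e ∈ E, ¬ S ⊆ e) : ¬ (U S ≤ ⨆ e ∈ E, U e) := by
  intro hle
  have hnt : Nontrivial ↥S := by
    have : Finite ↥S := Subtype.finite
    exact Finite.one_lt_card_iff_nontrivial.mp (by omega)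
  have hbot : (⊥ : Setoid ↥S) ≠ ⊤ := by
    obtain ⟨x, y, hxy⟩ := hnt.exists_pair_ne
    intro h
    have h2 : (⊥ : Setoid ↥S) x y := by rw [h]; trivial
    exact hxy h2
  have hker : (⨆ e ∈ E, U e) ≤ LinearMap.ker (functL S) := by
    refine iSup₂_le fun e he => ?_
    rw [U, Submodule.span_le]
    rintro f ⟨π, hπ, rfl⟩
    rw [SetLike.mem_coe, LinearMap.mem_ker]
    obtain ⟨v, hvS, hve⟩ := Set.not_subset.mp (hne e he)
    exact functL_other S e ⟨v, hvS⟩ hve (exists_ne _) π hπ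
  have h1 : ind S ⊥ ∈ U S := Submodule.subset_span ⟨⊥, hbot, rfl⟩
  have h2 := hker (hle h1)
  rw [LinearMap.mem_ker, functL_self S ⊥ hbot] at h2
  exact wt_ne_zero _ h2

/-- if `E` is an antichain of subsets of `V` of size ≥ 2 and `W = ∑_{e ∈ E} U_e`,
then the maximal elements (under inclusion) of `D = {S : |S| ≥ 2, U_S ⊆ W}` are exactly the
hyperedges in `E`. -/
theorem stmt14 (E : Set (Set V)) (hEfin : E.Finite) (hE2 : ∀ e ∈ E, 2 ≤ Nat.card ↥e)
    (hanti : ∀ e ∈ E, ∀ f ∈ E, e ⊆ f → e = f) :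
    ∀ S : Set V,
      (S ∈ {S : Set V | 2 ≤ Nat.card ↥S ∧ U S ≤ ⨆ e ∈ E, U e} ∧
        ∀ S' ∈ {S : Set V | 2 ≤ Nat.card ↥S ∧ U S ≤ ⨆ e ∈ E, U e}, S ⊆ S' → S = S')
      ↔ S ∈ E := by
  intro S
  have hsub : ∀ T : Set V, 2 ≤ Nat.card ↥T → (U T ≤ ⨆ e ∈ E, U e) → ∃ e ∈ E, T ⊆ e := by
    intro T hT hle
    by_contra h
    push_neg at h
    exact key_lemma T hT E (fun e he hTe => (h e he) hTe) hle
  constructor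
  · rintro ⟨⟨hcard, hle⟩, hmax⟩
    obtain ⟨e, he, hSe⟩ := hsub S hcard hle
    have heD : e ∈ {S : Set V | 2 ≤ Nat.card ↥S ∧ U S ≤ ⨆ e ∈ E, U e} :=
      ⟨hE2 e he, le_iSup₂ (f := fun e _ => U e) e he⟩
    rw [hmax e heD hSe]
    exact he
  · intro hS
    refine ⟨⟨hE2 S hS, le_iSup₂ (f := fun e _ => U e) S hS⟩, ?_⟩
    rintro S' ⟨hcard', hle'⟩ hSS'
    obtain ⟨e, he, hS'e⟩ := hsub S' hcard' hle'
    have : S = e := hanti S hS e he (hSS'.trans hS'e)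
    exact subset_antisymm hSS' (this ▸ hS'e)
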